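/- Let P, Q be coprime polynomials with deg P = n, deg Q = m, and let R = P/Q. Let α ∈ ℂ with P(α)Q(α) ≠ 0 and R(α) ≠ 0, let a ≠ 0, and let M(z) = a z/(z − α). Then the pushforward of the vector field R(z) d/dz under M is a rational vector field R̃(w) d/dw where R̃(w) = M'(M⁻¹(w)) · R(M⁻¹(w)) is a quotient of two polynomials of degrees n + m + 2 and n + m respectively. -/

import Mathlib

open Polynomial

noncomputable def myHom (P : Polynomial ℂ) (α a : ℂ) (n : ℕ) : Polynomial ℂ :=
  ∑ k ∈ Finset.range (n+1), C (P.coeff k * α^k) * (X^k * (X - C a)^(n-k))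

lemma myHom_coeff (P : Polynomial ℂ) (α a : ℂ) (n : ℕ) (hn : P.natDegree = n) :
    (myHom P α a n).coeff n = P.eval α := by
  unfold myHom
  rw [finset_sum_coeff]
  have h1 : ∀ k ∈ Finset.range (n+1),
      (C (P.coeff k * α^k) * (X^k * (X - C a)^(n-k))).coeff n = P.coeff k * α^k := by
    intro k hk
    rw [Finset.mem_range] at hk
    have hkn : k ≤ n := Nat.lt_succ_iff.mp hk
    have hmon : ((X:Polynomial ℂ)^k * (X - C a)^(n-k)).Monic :=
      (monic_X_pow k).mul ((monic_X_sub_C a).pow _)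
    have hdeg : ((X:Polynomial ℂ)^k * (X - C a)^(n-k)).natDegree = n := by
      rw [Monic.natDegree_mul (monic_X_pow k) ((monic_X_sub_C a).pow _),
        natDegree_X_pow, natDegree_pow, natDegree_X_sub_C]
      omega
    rw [coeff_C_mul]
    have h2 := hmon.coeff_natDegree
    rw [hdeg] at h2
    rw [h2, mul_one]
  rw [Finset.sum_congr rfl h1, eval_eq_sum_range, hn]

lemma myHom_natDegree (P : Polynomial ℂ) (α a : ℂ) (n : ℕ) (hn : P.natDegree = n)
    (hPα : P.eval α ≠ 0) : (myHom P α a n).natDegree = n := by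
  have hle : (myHom P α a n).natDegree ≤ n := by
    unfold myHom
    apply Polynomial.natDegree_sum_le_of_forall_le
    intro k hk
    rw [Finset.mem_range] at hk
    calc (C (P.coeff k * α^k) * (X^k * (X - C a)^(n-k))).natDegree
        ≤ (C (P.coeff k * α^k)).natDegree + ((X:Polynomial ℂ)^k * (X - C a)^(n-k)).natDegree :=
          natDegree_mul_le
      _ ≤ 0 + (((X:Polynomial ℂ)^k).natDegree + ((X - C a)^(n-k) : Polynomial ℂ).natDegree) := by
          gcongr
          · exact le_of_eq (natDegree_C _)
          · exact natDegree_mul_le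
      _ ≤ n := by
          rw [natDegree_X_pow, natDegree_pow, natDegree_X_sub_C]
          omega
  have hc : (myHom P α a n).coeff n ≠ 0 := by
    rw [myHom_coeff P α a n hn]; exact hPα
  exact le_antisymm hle (le_natDegree_of_ne_zero hc)

lemma myHom_ne_zero (P : Polynomial ℂ) (α a : ℂ) (n : ℕ) (hn : P.natDegree = n)
    (hPα : P.eval α ≠ 0) : myHom P α a n ≠ 0 := by
  intro h
  apply hPα
  rw [← myHom_coeff P α a n hn, h, coeff_zero]

lemma myHom_eval (P : Polynomial ℂ) (α a : ℂ) (n : ℕ) (hn : P.natDegree = n)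
    (w : ℂ) (hw : w - a ≠ 0) :
    (myHom P α a n).eval w = (w - a)^n * P.eval (α * w / (w - a)) := by
  unfold myHom
  rw [eval_finset_sum]
  have heval := P.eval_eq_sum_range (α * w / (w - a))
  rw [hn] at heval
  rw [heval, Finset.mul_sum]
  apply Finset.sum_congr rfl
  intro k hk
  rw [Finset.mem_range] at hk
  have hkn : k ≤ n := Nat.lt_succ_iff.mp hk
  simp only [eval_mul, eval_C, eval_pow, eval_X, eval_sub]
  have hp : (w - a) ^ (n - k) * (w - a) ^ k = (w - a) ^ n := by
    rw [← pow_add, Nat.sub_add_cancel hkn]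
  rw [div_pow, ← hp, mul_pow, mul_div_assoc', mul_div_assoc', eq_div_iff (pow_ne_zero _ hw)]
  ring

/-- Let R = P/Q with P, Q coprime, deg P = n, deg Q = m, let α be a regular
point (P(α)Q(α) ≠ 0, R(α) ≠ 0), a ≠ 0, and M(z) = a z/(z − α) (with inverse
M⁻¹(w) = α w/(w − a)). Then the pushforward vector field
R̃(w) = M'(M⁻¹(w)) · R(M⁻¹(w)) is a quotient of two polynomials of degrees
n + m + 2 and n + m respectively. -/
theorem stmt_4 (P Q : Polynomial ℂ) (hcop : IsCoprime P Q) (n m : ℕ)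
    (hn : P.natDegree = n) (hm : Q.natDegree = m)
    (α a : ℂ) (hα : α ≠ 0) (ha : a ≠ 0)
    (hPα : P.eval α ≠ 0) (hQα : Q.eval α ≠ 0)
    (hRα : P.eval α / Q.eval α ≠ 0)
    (M Minv : ℂ → ℂ)
    (hM : ∀ z, M z = a * z / (z - α))
    (hMinv : ∀ w, Minv w = α * w / (w - a)) :
    ∃ Pt Qt : Polynomial ℂ, Pt.natDegree = n + m + 2 ∧ Qt.natDegree = n + m ∧
      ∀ w : ℂ, w ≠ a → Qt.eval w ≠ 0 →
        deriv M (Minv w) * (P.eval (Minv w) / Q.eval (Minv w)) =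
          Pt.eval w / Qt.eval w := by
  have hMf : M = fun z => a * z / (z - α) := funext hM
  set Ph := myHom P α a n with hPh
  set Qh := myHom Q α a m with hQh
  have hPhd : Ph.natDegree = n := myHom_natDegree P α a n hn hPα
  have hQhd : Qh.natDegree = m := myHom_natDegree Q α a m hm hQα
  have hPh0 : Ph ≠ 0 := myHom_ne_zero P α a n hn hPα
  have hQh0 : Qh ≠ 0 := myHom_ne_zero Q α a m hm hQα
  refine ⟨C (-(a*α)⁻¹) * ((X - C a)^(m+2) * Ph), (X - C a)^n * Qh, ?_, ?_, ?_⟩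
  · rw [natDegree_mul (by simp [ha, hα]) (mul_ne_zero (pow_ne_zero _ (X_sub_C_ne_zero a)) hPh0),
      natDegree_mul (pow_ne_zero _ (X_sub_C_ne_zero a)) hPh0,
      natDegree_C, natDegree_pow, natDegree_X_sub_C, hPhd]
    ring
  · rw [natDegree_mul (pow_ne_zero _ (X_sub_C_ne_zero a)) hQh0,
      natDegree_pow, natDegree_X_sub_C, hQhd]
    ring
  · intro w hw hQt
    have hwa : w - a ≠ 0 := sub_ne_zero.mpr hw
    have hz0 : Minv w = α * w / (w - a) := hMinv w
    have hQhe : Qh.eval w = (w - a)^m * Q.eval (α * w / (w - a)) :=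
      myHom_eval Q α a m hm w hwa
    have hPhe : Ph.eval w = (w - a)^n * P.eval (α * w / (w - a)) :=
      myHom_eval P α a n hn w hwa
    have hQh_ne : Qh.eval w ≠ 0 := by
      intro h
      apply hQt
      simp [eval_mul, h]
    have hQz : Q.eval (α * w / (w - a)) ≠ 0 := by
      intro h
      apply hQh_ne
      rw [hQhe, h, mul_zero]
    have hsub : α * w / (w - a) - α = a * α / (w - a) := by
      field_simp
      ring
    have hz0α : α * w / (w - a) - α ≠ 0 := by
      rw [hsub]
      exact div_ne_zero (mul_ne_zero ha hα) hwa
    have hD : deriv M (Minv w) = -((w - a)^2) / (a * α) := by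
      rw [hMf, hz0]
      set z0 := α * w / (w - a)
      have hder : HasDerivAt (fun z => a * z / (z - α))
          ((a * 1 * (z0 - α) - a * z0 * 1) / (z0 - α)^2) z0 := by
        exact (((hasDerivAt_id z0).const_mul a).div
          ((hasDerivAt_id z0).sub_const α) hz0α)
      have hnum : a * 1 * (z0 - α) - a * z0 * 1 = -(a * α) := by ring
      rw [hder.deriv, hnum, hsub, div_pow]
      field_simp
    rw [hD, hz0]
    simp only [eval_mul, eval_C, eval_pow, eval_sub, eval_X]
    rw [hPhe, hQhe]
    have h1 : ((w - a) ^ n : ℂ) ≠ 0 := pow_ne_zero _ hwa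
    have h2 : ((w - a) ^ m : ℂ) ≠ 0 := pow_ne_zero _ hwa
    field_simp
    ring
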